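/- In the algebra A (positive part of U_q(ŝl₂)) with generators x, y, let r be a positive integer and n ≥ 2r+1. Then for r+1 ≤ i ≤ n−r, the element x^i y^r x^{n−i} lies in the span of { x^ξ y^r x^{n−ξ} : 0 ≤ ξ ≤ r } together with { x^{n−ζ} y^r x^ζ : 0 ≤ ζ ≤ r−1 }. -/

import Mathlib

noncomputable section

/-- The generator `x` of the free algebra on two generators. -/
def Xf (K : Type) [Field K] : FreeAlgebra K (Fin 2) := FreeAlgebra.ι K 0

/-- The generator `y` of the free algebra on two generators. -/
def Yf (K : Type) [Field K] : FreeAlgebra K (Fin 2) := FreeAlgebra.ι K 1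

/-- The quantum integer `[3] = (q³−q⁻³)/(q−q⁻¹)`. -/
def qthree {K : Type} [Field K] (q : K) : K := (q ^ 3 - q⁻¹ ^ 3) / (q - q⁻¹)

/-- The `q`-Serre relations on the free algebra on `x, y`. -/
inductive QSerreRel (K : Type) [Field K] (q : K) :
    FreeAlgebra K (Fin 2) → FreeAlgebra K (Fin 2) → Prop
  | xrel : QSerreRel K q
      (Xf K ^ 3 * Yf K - qthree q • (Xf K ^ 2 * Yf K * Xf K)
        + qthree q • (Xf K * Yf K * Xf K ^ 2) - Yf K * Xf K ^ 3) 0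
  | yrel : QSerreRel K q
      (Yf K ^ 3 * Xf K - qthree q • (Yf K ^ 2 * Xf K * Yf K)
        + qthree q • (Yf K * Xf K * Yf K ^ 2) - Xf K * Yf K ^ 3) 0

/-- The algebra `𝒜` generated by `x, y` subject to the `q`-Serre relations
(the positive part of `U_q(ŝl₂)`). -/
abbrev QSerreAlg (K : Type) [Field K] (q : K) := RingQuot (QSerreRel K q)

/-- The generator `x` of `𝒜`. -/
def Xq (K : Type) [Field K] (q : K) : QSerreAlg K q :=
  RingQuot.mkAlgHom K (QSerreRel K q) (Xf K)

/-- The generator `y` of `𝒜`. -/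
def Yq (K : Type) [Field K] (q : K) : QSerreAlg K q :=
  RingQuot.mkAlgHom K (QSerreRel K q) (Yf K)

/-- A word in the letters `x, y` (`true` = `x`, `false` = `y`), as an element of `𝒜`. -/
def wordA {K : Type} [Field K] (q : K) (w : List Bool) : QSerreAlg K q :=
  (w.map (fun b => if b then Xq K q else Yq K q)).prod

/-- The height of a word: (number of `x`'s) − (number of `y`'s). -/
def wheight (w : List Bool) : ℤ := (w.count true : ℤ) - (w.count false : ℤ)

/-- A word is balanced whenever its height is `0`. -/
def BalancedW (w : List Bool) : Prop := wheight w = 0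

/-- A word is height-symmetric whenever its height vector `(h₀,…,h_n)`,
`h_i` = height of the suffix starting at position `i`, satisfies `h_i = h_{n−i}`. -/
def HeightSym (w : List Bool) : Prop :=
  ∀ i ≤ w.length, wheight (w.drop i) = wheight (w.drop (w.length - i))

/-- A word is nil whenever some entry of its height vector is negative. -/
def NilWord (w : List Bool) : Prop := ∃ i, wheight (w.drop i) < 0

/-- `𝓑`, the span of the balanced words in `𝒜`. -/
def Bbal (K : Type) [Field K] (q : K) : Submodule K (QSerreAlg K q) :=
  Submodule.span K {a | ∃ w : List Bool, BalancedW w ∧ a = wordA q w}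

/-- `𝓑^sym`, the span of the height-symmetric words in `𝒜`. -/
def Bsym (K : Type) [Field K] (q : K) : Submodule K (QSerreAlg K q) :=
  Submodule.span K {a | ∃ w : List Bool, HeightSym w ∧ a = wordA q w}

/-- `𝓑^nil`, the span of the nil balanced words in `𝒜`. -/
def Bnil (K : Type) [Field K] (q : K) : Submodule K (QSerreAlg K q) :=
  Submodule.span K {a | ∃ w : List Bool, BalancedW w ∧ NilWord w ∧ a = wordA q w}

namespace Stmt5Aux

variable {K : Type} [Field K] {q : K}

lemma qthree_eq (hq : q ≠ 0) (h2 : q ^ 2 ≠ 1) :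
    qthree q = q ^ 2 + 1 + (q ^ 2)⁻¹ := by
  have hne : q - q⁻¹ ≠ 0 := by
    intro h
    apply h2
    have h' : q = q⁻¹ := sub_eq_zero.mp h
    have : q * q = 1 := by nth_rewrite 2 [h']; field_simp
    rw [pow_two]; exact this
  rw [qthree, div_eq_iff hne]
  field_simp
  ring

set_option maxHeartbeats 1000000

lemma serreX (K : Type) [Field K] (q : K) :
    Xq K q ^ 3 * Yq K q - qthree q • (Xq K q ^ 2 * Yq K q * Xq K q)
      + qthree q • (Xq K q * Yq K q * Xq K q ^ 2) - Yq K q * Xq K q ^ 3 = 0 := by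
  have h := RingQuot.mkAlgHom_rel K (QSerreRel.xrel (K := K) (q := q))
  simpa [Xq, Yq, map_sub, map_add, map_mul, map_pow] using h

lemma serreY (K : Type) [Field K] (q : K) :
    Yq K q ^ 3 * Xq K q - qthree q • (Yq K q ^ 2 * Xq K q * Yq K q)
      + qthree q • (Yq K q * Xq K q * Yq K q ^ 2) - Xq K q * Yq K q ^ 3 = 0 := by
  have h := RingQuot.mkAlgHom_rel K (QSerreRel.yrel (K := K) (q := q))
  simpa [Xq, Yq, map_sub, map_add, map_mul, map_pow] using h

/-- The pre-automorphism on the free algebra. -/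
def tauPre (K : Type) [Field K] (q : K) : FreeAlgebra K (Fin 2) →ₐ[K] QSerreAlg K q :=
  FreeAlgebra.lift K (fun i => if i = 0 then (q ^ 2) • Xq K q else (q ^ 2)⁻¹ • Yq K q)

lemma tauPre_Xf : tauPre K q (Xf K) = (q ^ 2) • Xq K q := by
  simp [tauPre, Xf]

lemma tauPre_Yf : tauPre K q (Yf K) = (q ^ 2)⁻¹ • Yq K q := by
  simp [tauPre, Yf]

lemma tauPre_rel (hq : q ≠ 0) ⦃a b : FreeAlgebra K (Fin 2)⦄ (h : QSerreRel K q a b) :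
    tauPre K q a = tauPre K q b := by
  have hq2 : (q:K) ^ 2 ≠ 0 := pow_ne_zero 2 hq
  cases h with
  | xrel =>
      have hs := serreX K q
      simp only [map_sub, map_add, map_mul, map_smul, map_pow, tauPre_Xf, tauPre_Yf, map_zero,
        smul_pow, smul_mul_assoc, mul_smul_comm, smul_smul]
      linear_combination (norm := (match_scalars <;> field_simp <;> ring)) (q ^ 4 : K) • hs
  | yrel =>
      have hs := serreY K q
      simp only [map_sub, map_add, map_mul, map_smul, map_pow, tauPre_Xf, tauPre_Yf, map_zero,
        smul_pow, smul_mul_assoc, mul_smul_comm, smul_smul]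
      linear_combination (norm := (match_scalars <;> field_simp <;> ring)) ((q ^ 4 : K))⁻¹ • hs

/-- The weight automorphism `τ` with `τ(x) = q²x`, `τ(y) = q⁻²y`. -/
def tau (K : Type) [Field K] (q : K) (hq : q ≠ 0) : QSerreAlg K q →ₐ[K] QSerreAlg K q :=
  RingQuot.liftAlgHom K ⟨tauPre K q, tauPre_rel hq⟩

variable (hq : q ≠ 0)

lemma tau_X : tau K q hq (Xq K q) = (q ^ 2) • Xq K q := by
  rw [tau, Xq, RingQuot.liftAlgHom_mkAlgHom_apply, tauPre_Xf]; rfl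

lemma tau_Y : tau K q hq (Yq K q) = (q ^ 2)⁻¹ • Yq K q := by
  rw [tau, Yq, RingQuot.liftAlgHom_mkAlgHom_apply, tauPre_Yf]; rfl

/-- The twisted derivation `D(u) = xu − τ(u)x`. -/
def Dmap (K : Type) [Field K] (q : K) (hq : q ≠ 0) : QSerreAlg K q →ₗ[K] QSerreAlg K q where
  toFun u := Xq K q * u - tau K q hq u * Xq K q
  map_add' u v := by simp [map_add, mul_add, add_mul]; abel
  map_smul' c u := by simp [map_smul, mul_smul_comm, smul_mul_assoc, smul_sub]

lemma Dmap_apply (u : QSerreAlg K q) :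
    Dmap K q hq u = Xq K q * u - tau K q hq u * Xq K q := rfl

lemma Dmap_leibniz (u v : QSerreAlg K q) :
    Dmap K q hq (u * v) = Dmap K q hq u * v + tau K q hq u * Dmap K q hq v := by
  simp only [Dmap_apply, map_mul]
  simp only [mul_sub, sub_mul, mul_add, add_mul, mul_assoc]
  abel

lemma Dmap_tau (u : QSerreAlg K q) :
    Dmap K q hq (tau K q hq u) = (q ^ 2)⁻¹ • tau K q hq (Dmap K q hq u) := by
  have : tau K q hq (Dmap K q hq u) = (q ^ 2) • Dmap K q hq (tau K q hq u) := by
    simp only [Dmap_apply, map_sub, map_mul, tau_X, smul_mul_assoc, mul_smul_comm, smul_sub]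
  rw [this, smul_smul, inv_mul_cancel₀ (pow_ne_zero 2 hq), one_smul]

lemma tau_iter_smul (s : ℕ) (c : K) (u : QSerreAlg K q) :
    (⇑(tau K q hq))^[s] (c • u) = c • (⇑(tau K q hq))^[s] u := by
  induction s generalizing u with
  | zero => simp
  | succ s ih => rw [Function.iterate_succ_apply, map_smul, ih, ← Function.iterate_succ_apply]

lemma Dmap_tau_iter (s : ℕ) (u : QSerreAlg K q) :
    Dmap K q hq ((⇑(tau K q hq))^[s] u) = ((q ^ 2)⁻¹) ^ s • (⇑(tau K q hq))^[s] (Dmap K q hq u) := by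
  induction s generalizing u with
  | zero => simp
  | succ s ih =>
      rw [Function.iterate_succ_apply, ih, Function.iterate_succ_apply]
      rw [Dmap_tau, tau_iter_smul, smul_smul, ← pow_succ]

lemma tau_iter_zero (s : ℕ) : (⇑(tau K q hq))^[s] (0 : QSerreAlg K q) = 0 := by
  induction s with
  | zero => rfl
  | succ s ih => rw [Function.iterate_succ_apply, map_zero, ih]

lemma Dmap_iter_zero (s : ℕ) : (⇑(Dmap K q hq))^[s] (0 : QSerreAlg K q) = 0 := by
  induction s with
  | zero => rfl
  | succ s ih => rw [Function.iterate_succ_apply, map_zero, ih]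

lemma Dpow_mul_mem (u v : QSerreAlg K q) (n : ℕ) :
    (⇑(Dmap K q hq))^[n] (u * v) ∈ Submodule.span K
      {w | ∃ j ≤ n, w = (⇑(tau K q hq))^[n-j] ((⇑(Dmap K q hq))^[j] u)
        * (⇑(Dmap K q hq))^[n-j] v} := by
  induction n with
  | zero => exact Submodule.subset_span ⟨0, le_refl 0, by simp⟩
  | succ n ih =>
      rw [Function.iterate_succ_apply']
      have hmap : (⇑(Dmap K q hq))^[n+1] (u*v) = (⇑(Dmap K q hq))^[n+1] (u*v) := rfl
      have h2 : Dmap K q hq ((⇑(Dmap K q hq))^[n] (u * v)) ∈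
          Submodule.map (Dmap K q hq) (Submodule.span K
            {w | ∃ j ≤ n, w = (⇑(tau K q hq))^[n-j] ((⇑(Dmap K q hq))^[j] u)
              * (⇑(Dmap K q hq))^[n-j] v}) := ⟨_, ih, rfl⟩
      rw [Submodule.map_span] at h2
      refine Submodule.span_le.mpr ?_ h2
      rintro _ ⟨w, ⟨j, hj, rfl⟩, rfl⟩
      rw [Dmap_leibniz, Dmap_tau_iter, smul_mul_assoc]
      refine add_mem (Submodule.smul_mem _ _ (Submodule.subset_span ?_))
        (Submodule.subset_span ?_)
      · refine ⟨j+1, by omega, ?_⟩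
        rw [← Function.iterate_succ_apply' (⇑(Dmap K q hq)) j u]
        congr 2 <;> omega
      · refine ⟨j, by omega, ?_⟩
        rw [← Function.iterate_succ_apply' (⇑(tau K q hq)) (n-j),
            ← Function.iterate_succ_apply' (⇑(Dmap K q hq)) (n-j)]
        congr 2 <;> omega

lemma Dpow_mul_eq_zero {u v : QSerreAlg K q} {a b : ℕ}
    (hu : (⇑(Dmap K q hq))^[a] u = 0) (hv : (⇑(Dmap K q hq))^[b] v = 0) :
    (⇑(Dmap K q hq))^[a + b - 1] (u * v) = 0 := by
  have h := Dpow_mul_mem hq u v (a + b - 1)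
  have hsub : {w : QSerreAlg K q | ∃ j ≤ a + b - 1,
      w = (⇑(tau K q hq))^[a+b-1-j] ((⇑(Dmap K q hq))^[j] u)
        * (⇑(Dmap K q hq))^[a+b-1-j] v} ⊆ {0} := by
    rintro _ ⟨j, hj, rfl⟩
    rcases le_or_gt a j with hja | hja
    · have : (⇑(Dmap K q hq))^[j] u = 0 := by
        rw [show j = (j - a) + a by omega, Function.iterate_add_apply, hu, Dmap_iter_zero]
      rw [this, tau_iter_zero, zero_mul]
      rfl
    · have : (⇑(Dmap K q hq))^[a+b-1-j] v = 0 := by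
        rw [show a+b-1-j = (a+b-1-j-b) + b by omega, Function.iterate_add_apply, hv,
          Dmap_iter_zero]
      rw [this, mul_zero]
      rfl
  have hbot : (⇑(Dmap K q hq))^[a + b - 1] (u * v) ∈ (⊥ : Submodule K (QSerreAlg K q)) := by
    refine Submodule.span_le.mpr ?_ h
    intro w hw
    have := hsub hw
    simp only [Set.mem_singleton_iff] at this
    simp [this]
  simpa using hbot


lemma Dpow3_Y (h2 : q ^ 2 ≠ 1) : (⇑(Dmap K q hq))^[3] (Yq K q) = 0 := by
  have hq2 : (q : K) ^ 2 ≠ 0 := pow_ne_zero 2 hq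
  have hs := serreX K q
  rw [qthree_eq hq h2] at hs
  show Dmap K q hq (Dmap K q hq (Dmap K q hq (Yq K q))) = 0
  simp only [Dmap_apply, map_sub, map_mul, map_smul, tau_X, tau_Y, smul_mul_assoc,
    mul_smul_comm, smul_smul, smul_sub, sub_mul, mul_sub, mul_assoc]
  simp only [pow_succ, pow_zero, one_mul, mul_assoc] at hs
  linear_combination (norm := (match_scalars <;> field_simp <;> ring)) hs

lemma Dpow_Ypow_zero (h2 : q ^ 2 ≠ 1) (r : ℕ) (hr : 1 ≤ r) :
    (⇑(Dmap K q hq))^[2*r+1] (Yq K q ^ r) = 0 := by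
  induction r with
  | zero => omega
  | succ r ih =>
      rcases Nat.eq_or_lt_of_le hr with h | h
      · have : r = 0 := by omega
        subst this
        simpa using Dpow3_Y hq h2
      · have hr' : 1 ≤ r := by omega
        have hz := Dpow_mul_eq_zero hq (Dpow3_Y hq h2) (ih hr')
        rw [show 3 + (2*r+1) - 1 = 2*(r+1)+1 by omega] at hz
        rw [show Yq K q ^ (r+1) = Yq K q * Yq K q ^ r by rw [pow_succ']]
        exact hz

/-- The scalar `q^{2(a-r)}`. -/
def lamq (q : K) (r a : ℕ) : K := q ^ (2*a) * (q ^ (2*r))⁻¹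

/-- The polynomial `∏_{a<m} (X - q^{2(a-r)})`. -/
def Pm (q : K) (r m : ℕ) : Polynomial K :=
  ∏ a ∈ Finset.range m, (Polynomial.X - Polynomial.C (lamq q r a))

lemma tau_monomial (j r s : ℕ) :
    tau K q hq (Xq K q ^ j * Yq K q ^ r * Xq K q ^ s)
      = (q ^ (2*(j+s)) * (q ^ (2*r))⁻¹) • (Xq K q ^ j * Yq K q ^ r * Xq K q ^ s) := by
  simp only [map_mul, map_pow, tau_X, tau_Y, smul_pow, smul_mul_assoc, mul_smul_comm, smul_smul]
  match_scalars
  field_simp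
  rw [one_div, inv_pow, ← pow_mul, ← pow_mul, ← pow_mul]
  field_simp
  ring

lemma Dmap_monomial (j r s : ℕ) :
    Dmap K q hq (Xq K q ^ j * Yq K q ^ r * Xq K q ^ s)
      = Xq K q ^ (j+1) * Yq K q ^ r * Xq K q ^ s
        - (q ^ (2*(j+s)) * (q ^ (2*r))⁻¹) • (Xq K q ^ j * Yq K q ^ r * Xq K q ^ (s+1)) := by
  rw [Dmap_apply, tau_monomial]
  rw [smul_mul_assoc]
  congr 1
  · rw [pow_succ']
    noncomm_ring
  · congr 1
    rw [pow_succ]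
    noncomm_ring

lemma Pm_natDegree_le (r m : ℕ) : (Pm q r m).natDegree ≤ m := by
  refine le_trans (Polynomial.natDegree_prod_le _ _) ?_
  have : ∀ a ∈ Finset.range m, (Polynomial.X - Polynomial.C (lamq q r a)).natDegree = 1 :=
    fun a _ => Polynomial.natDegree_X_sub_C _
  rw [Finset.sum_congr rfl this]
  simp

lemma Dpow_Ypow_expand (r : ℕ) (m : ℕ) :
    (⇑(Dmap K q hq))^[m] (Yq K q ^ r)
      = ∑ j ∈ Finset.range (m+1), (Pm q r m).coeff j •
          (Xq K q ^ j * Yq K q ^ r * Xq K q ^ (m-j)) := by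
  induction m with
  | zero => simp [Pm]
  | succ m ih =>
      rw [Function.iterate_succ_apply', ih, map_sum]
      have hterm : ∀ j ∈ Finset.range (m+1),
          Dmap K q hq ((Pm q r m).coeff j • (Xq K q ^ j * Yq K q ^ r * Xq K q ^ (m-j)))
            = (Pm q r m).coeff j • (Xq K q ^ (j+1) * Yq K q ^ r * Xq K q ^ (m-j))
              - ((Pm q r m).coeff j * lamq q r m) •
                  (Xq K q ^ j * Yq K q ^ r * Xq K q ^ (m+1-j)) := by
        intro j hj
        rw [Finset.mem_range] at hj
        rw [map_smul, Dmap_monomial, smul_sub, smul_smul]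
        unfold lamq
        rw [show j + (m - j) = m by omega, show m - j + 1 = m + 1 - j by omega]
      rw [Finset.sum_congr rfl hterm, Finset.sum_sub_distrib]
      -- now the RHS
      have hP : Pm q r (m+1) = Pm q r m * Polynomial.X - Pm q r m * Polynomial.C (lamq q r m) := by
        rw [Pm, Finset.prod_range_succ, mul_sub]
        rfl
      rw [hP]
      have hsplit : ∀ j, (Pm q r m * Polynomial.X - Pm q r m * Polynomial.C (lamq q r m)).coeff j
          = (Pm q r m * Polynomial.X).coeff j - (Pm q r m).coeff j * lamq q r m := by
        intro j
        rw [Polynomial.coeff_sub, Polynomial.coeff_mul_C]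
      have hsplit2 : ∀ j ∈ Finset.range (m+1+1),
          (Pm q r m * Polynomial.X - Pm q r m * Polynomial.C (lamq q r m)).coeff j •
              (Xq K q ^ j * Yq K q ^ r * Xq K q ^ (m+1-j))
            = (Pm q r m * Polynomial.X).coeff j • (Xq K q ^ j * Yq K q ^ r * Xq K q ^ (m+1-j))
              - ((Pm q r m).coeff j * lamq q r m) •
                  (Xq K q ^ j * Yq K q ^ r * Xq K q ^ (m+1-j)) := by
        intro j _
        rw [hsplit]
        module
      rw [Finset.sum_congr rfl hsplit2, Finset.sum_sub_distrib]
      congr 1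
      · -- ∑_{j<m+2} (Pm*X).coeff j • X^j Y^r X^{m+1-j} = ∑_{j<m+1} c_j • X^{j+1} Y^r X^{m-j}
        conv_rhs => rw [Finset.sum_range_succ']
        simp only [Polynomial.coeff_mul_X, Polynomial.coeff_mul_X_zero, zero_smul, add_zero]
        refine Finset.sum_congr rfl fun j hj => ?_
        rw [Finset.mem_range] at hj
        congr 3
        omega
      · -- truncate top coefficient
        conv_rhs => rw [Finset.sum_range_succ]
        have h0 : (Pm q r m).coeff (m+1) = 0 :=
          Polynomial.coeff_eq_zero_of_natDegree_lt (lt_of_le_of_lt (Pm_natDegree_le r m) (by omega))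
        rw [h0, zero_mul, zero_smul, add_zero]

omit hq in
lemma master (hq : q ≠ 0) (h2 : q ^ 2 ≠ 1) (r n a : ℕ) (hr : 1 ≤ r) (han : a + (2*r+1) ≤ n) :
    ∑ j ∈ Finset.range (2*r+2), (Pm q r (2*r+1)).coeff j •
      (Xq K q ^ (a+j) * Yq K q ^ r * Xq K q ^ (n-(a+j))) = 0 := by
  have h0 : ∑ j ∈ Finset.range (2*r+1+1), (Pm q r (2*r+1)).coeff j •
      (Xq K q ^ j * Yq K q ^ r * Xq K q ^ (2*r+1-j)) = 0 := by
    rw [← Dpow_Ypow_expand hq r (2*r+1)]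
    exact Dpow_Ypow_zero hq h2 r hr
  have hmul := congrArg (fun z => Xq K q ^ a * z * Xq K q ^ (n - (2*r+1) - a)) h0
  simp only [mul_zero, zero_mul] at hmul
  rw [Finset.mul_sum, Finset.sum_mul] at hmul
  rw [show (2*r+2) = 2*r+1+1 from rfl, ← hmul]
  refine Finset.sum_congr rfl fun j hj => ?_
  rw [Finset.mem_range] at hj
  rw [mul_smul_comm, smul_mul_assoc]
  congr 1
  calc Xq K q ^ (a+j) * Yq K q ^ r * Xq K q ^ (n-(a+j))
      = (Xq K q ^ a * Xq K q ^ j) * Yq K q ^ r * (Xq K q ^ (2*r+1-j) * Xq K q ^ (n-(2*r+1)-a)) := by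
        rw [← pow_add, ← pow_add]
        congr 2
        omega
    _ = Xq K q ^ a * (Xq K q ^ j * Yq K q ^ r * Xq K q ^ (2*r+1-j)) * Xq K q ^ (n-(2*r+1)-a) := by
        noncomm_ring

section LinAlg

variable {V : Type} [AddCommGroup V] [Module K V]

omit hq in
lemma mat_smul_sum {N : ℕ} (A B : Matrix (Fin N) (Fin N) K) (h : A * B = 1)
    (v : Fin N → V) (j : Fin N) :
    ∑ k, A j k • (∑ m, B k m • v m) = v j := by
  have step : ∀ k, A j k • (∑ m, B k m • v m) = ∑ m, (A j k * B k m) • v m := by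
    intro k
    rw [Finset.smul_sum]
    simp [smul_smul]
  rw [Finset.sum_congr rfl fun k _ => step k, Finset.sum_comm]
  have hrow : ∀ m, (∑ k, A j k * B k m) = if j = m then (1:K) else 0 := by
    intro m
    rw [← Matrix.mul_apply, h, Matrix.one_apply]
  have : ∀ m, ∑ k, (A j k * B k m) • v m = (if j = m then (1:K) else 0) • v m := by
    intro m
    rw [← Finset.sum_smul, hrow]
  rw [Finset.sum_congr rfl fun m _ => this m]
  simp [Finset.sum_ite_eq]

omit hq in
lemma matrix_solve {N : ℕ} (M : Matrix (Fin N) (Fin N) K) (hM : IsUnit M.det)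
    (f : Fin N → V) :
    ∃ g : Fin N → V, ∀ j, ∑ k, M j k • g k = f j :=
  ⟨fun k => ∑ m, M⁻¹ k m • f m, fun j =>
    mat_smul_sum M M⁻¹ (Matrix.mul_nonsing_inv M hM) f j⟩

omit hq in
lemma matrix_mem {N : ℕ} (M : Matrix (Fin N) (Fin N) K) (hM : IsUnit M.det)
    (f g : Fin N → V) (h : ∀ j, f j = ∑ k, M j k • g k) (k : Fin N) :
    g k ∈ Submodule.span K (Set.range f) := by
  have heq : ∑ j, M⁻¹ k j • f j = g k := by
    calc ∑ j, M⁻¹ k j • f j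
        = ∑ j, M⁻¹ k j • (∑ k', M j k' • g k') :=
          Finset.sum_congr rfl fun j _ => by rw [h j]
      _ = g k := mat_smul_sum M⁻¹ M (Matrix.nonsing_inv_mul M hM) g k
  rw [← heq]
  exact Submodule.sum_mem _ fun j _ =>
    Submodule.smul_mem _ _ (Submodule.subset_span ⟨j, rfl⟩)

end LinAlg

omit hq in
lemma Pm_monic (r m : ℕ) : (Pm q r m).Monic :=
  Polynomial.monic_prod_of_monic _ _ fun a _ => Polynomial.monic_X_sub_C _

omit hq in
lemma Pm_natDegree (r m : ℕ) : (Pm q r m).natDegree = m := by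
  rw [Pm, Polynomial.natDegree_prod]
  · simp [Polynomial.natDegree_X_sub_C]
  · intro a _
    exact Polynomial.X_sub_C_ne_zero _

omit hq in
lemma Pm_coeff_top (r m : ℕ) : (Pm q r m).coeff m = 1 := by
  have := Pm_monic (q := q) r m
  rw [Polynomial.Monic, Polynomial.leadingCoeff, Pm_natDegree] at this
  exact this

omit hq in
lemma Pm_root_sum (r m k : ℕ) (hk : k < m) :
    ∑ j ∈ Finset.range (m+1), (Pm q r m).coeff j * lamq q r k ^ j = 0 := by
  have hdeg : (Pm q r m).natDegree < m + 1 := by rw [Pm_natDegree]; omega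
  rw [← Polynomial.eval_eq_sum_range' hdeg]
  rw [Pm, Polynomial.eval_prod]
  refine Finset.prod_eq_zero (Finset.mem_range.mpr hk) ?_
  simp

omit hq in
lemma qpow_inj (hq : q ≠ 0) (hroot : ∀ m : ℕ, 0 < m → q ^ m ≠ 1) {a b : ℕ}
    (h : q ^ a = q ^ b) : a = b := by
  have aux : ∀ a b : ℕ, a < b → q ^ a = q ^ b → False := by
    intro a b hab habq
    have : q ^ a * q ^ (b - a) = q ^ a * 1 := by
      rw [← pow_add, mul_one, show a + (b - a) = b by omega, habq]
    have := mul_left_cancel₀ (pow_ne_zero a hq) this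
    exact hroot (b - a) (by omega) this
  rcases lt_trichotomy a b with h' | h' | h'
  · exact absurd h (fun h => aux a b h' h)
  · exact h'
  · exact absurd h (fun h => aux b a h' h.symm)

end Stmt5Aux

open Stmt5Aux in
/-- in `𝒜`, for `r ≥ 1`, `n ≥ 2r+1` and `r+1 ≤ i ≤ n−r`, the element
`x^i y^r x^{n−i}` lies in the span of `{x^ξ y^r x^{n−ξ} : 0 ≤ ξ ≤ r}` together with
`{x^{n−ζ} y^r x^ζ : 0 ≤ ζ ≤ r−1}`. -/
theorem stmt5 (K : Type) [Field K] [IsAlgClosed K] [CharZero K]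
    (q : K) (hq : q ≠ 0) (hroot : ∀ m : ℕ, 0 < m → q ^ m ≠ 1)
    (r n : ℕ) (hr : 1 ≤ r) (hn : 2 * r + 1 ≤ n)
    (i : ℕ) (hi1 : r + 1 ≤ i) (hi2 : i + r ≤ n) :
    Xq K q ^ i * Yq K q ^ r * Xq K q ^ (n - i) ∈
      Submodule.span K
        ({a | ∃ ξ ≤ r, a = Xq K q ^ ξ * Yq K q ^ r * Xq K q ^ (n - ξ)} ∪
          {a | ∃ ζ < r, a = Xq K q ^ (n - ζ) * Yq K q ^ r * Xq K q ^ ζ}) := by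
  have hq2 : q ^ 2 ≠ 1 := hroot 2 (by norm_num)
  set N := 2 * r + 1 with hN
  set e : ℕ → QSerreAlg K q := fun i => Xq K q ^ i * Yq K q ^ r * Xq K q ^ (n - i) with he
  set lam : Fin N → K := fun k => lamq q r k with hlam
  -- recurrence
  have hrec : ∀ b, b + N ≤ n →
      ∑ j ∈ Finset.range (N + 1), (Pm q r N).coeff j • e (b + j) = 0 := by
    intro b hb
    have := master (K := K) (q := q) hq hq2 r n b hr hb
    rw [show 2*r+2 = N+1 from rfl] at this
    exact this
  -- injectivity of lam
  have hlam_inj : Function.Injective lam := by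
    intro k k' hkk
    have : q ^ (2 * (k:ℕ)) = q ^ (2 * (k':ℕ)) := by
      have := hkk
      simp only [hlam, lamq] at this
      exact mul_right_cancel₀ (inv_ne_zero (pow_ne_zero _ hq)) this
    have := qpow_inj hq hroot this
    ext
    omega
  -- Vandermonde matrix on first N values
  have hB : IsUnit ((Matrix.vandermonde lam).transpose).det := by
    rw [Matrix.det_transpose]
    exact (Matrix.det_vandermonde_ne_zero_iff.mpr hlam_inj).isUnit
  obtain ⟨v, hv⟩ := matrix_solve (Matrix.vandermonde lam).transpose hB (fun m : Fin N => e m)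
  -- all values decompose geometrically
  have hall : ∀ a, a ≤ n → e a = ∑ k, lam k ^ a • v k := by
    intro a
    induction a using Nat.strong_induction_on with
    | _ a ih =>
      intro han
      by_cases hlt : a < N
      · have := hv ⟨a, hlt⟩
        simp only [Matrix.transpose_apply, Matrix.vandermonde_apply] at this
        exact this.symm
      · push_neg at hlt
        have hb : (a - N) + N ≤ n := by omega
        have h0 := hrec (a - N) hb
        rw [Finset.sum_range_succ, Pm_coeff_top, show a - N + N = a by omega, one_smul] at h0
        have hea : e a = - ∑ j ∈ Finset.range N, (Pm q r N).coeff j • e (a - N + j) :=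
          eq_neg_of_add_eq_zero_right h0
        have hterm : ∀ j ∈ Finset.range N,
            (Pm q r N).coeff j • e (a - N + j)
              = ∑ k, ((Pm q r N).coeff j * lam k ^ (a - N + j)) • v k := by
          intro j hj
          rw [Finset.mem_range] at hj
          rw [ih (a - N + j) (by omega) (by omega), Finset.smul_sum]
          exact Finset.sum_congr rfl fun k _ => by rw [smul_smul]
        rw [hea, Finset.sum_congr rfl hterm, Finset.sum_comm, ← Finset.sum_neg_distrib]
        refine Finset.sum_congr rfl fun k _ => ?_
        rw [← Finset.sum_smul, ← neg_smul]
        congr 1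
        have hs := Pm_root_sum (q := q) r N k k.isLt
        rw [Finset.sum_range_succ, Pm_coeff_top, one_mul] at hs
        have hs' : ∑ j ∈ Finset.range N, (Pm q r N).coeff j * lam k ^ j = - lam k ^ (N:ℕ) :=
          eq_neg_of_add_eq_zero_left hs
        calc - ∑ j ∈ Finset.range N, (Pm q r N).coeff j * lam k ^ (a - N + j)
            = - ∑ j ∈ Finset.range N, lam k ^ (a-N) * ((Pm q r N).coeff j * lam k ^ j) := by
              congr 1
              refine Finset.sum_congr rfl fun j _ => ?_
              rw [pow_add]
              ring
          _ = - (lam k ^ (a-N) * (- lam k ^ (N:ℕ))) := by rw [← Finset.mul_sum, hs']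
          _ = lam k ^ a := by
              rw [mul_neg, neg_neg, ← pow_add, show a - N + N = a by omega]
  -- position map and second Vandermonde system
  set p : Fin N → ℕ := fun j => if (j:ℕ) ≤ r then (j:ℕ) else n - 2*r + (j:ℕ) with hp
  have hp_le : ∀ j, p j ≤ n := by
    intro j
    have := j.isLt
    simp only [hp]
    split <;> omega
  have hp_inj : Function.Injective p := by
    intro j j' hjj
    have h1 := j.isLt
    have h2 := j'.isLt
    simp only [hp] at hjj
    ext
    split at hjj <;> split at hjj <;> omega
  set mu : Fin N → K := fun j => q ^ (2 * p j) with hmu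
  have hmu_inj : Function.Injective mu := by
    intro j j' hjj
    have h2p := qpow_inj hq hroot (a := 2 * p j) (b := 2 * p j') hjj
    exact hp_inj (by omega)
  set d : Fin N → K := fun j => (q ^ (2 * r * p j))⁻¹ with hd
  set C : Matrix (Fin N) (Fin N) K := Matrix.of (fun j k => lam k ^ p j) with hC
  have hCeq : C = Matrix.diagonal d * Matrix.vandermonde mu := by
    ext j k
    rw [Matrix.diagonal_mul]
    simp only [hC, hd, hmu, hlam, Matrix.of_apply, Matrix.vandermonde_apply, lamq]
    rw [mul_pow, ← pow_mul, inv_pow, ← pow_mul, ← pow_mul]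
    rw [mul_comm ((q ^ (2 * r * p j))⁻¹) _]
    congr 2 <;> ring
  have hCdet : IsUnit C.det := by
    rw [hCeq, Matrix.det_mul, Matrix.det_diagonal]
    refine (mul_ne_zero ?_ (Matrix.det_vandermonde_ne_zero_iff.mpr hmu_inj)).isUnit
    exact Finset.prod_ne_zero_iff.mpr fun j _ => inv_ne_zero (pow_ne_zero _ hq)
  have hCv : ∀ j, e (p j) = ∑ k, C j k • v k := by
    intro j
    rw [hall (p j) (hp_le j)]
    rfl
  have hmem := matrix_mem C hCdet (fun j => e (p j)) v hCv
  -- conclusion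
  have hsubset : Set.range (fun j => e (p j)) ⊆
      ({a | ∃ ξ ≤ r, a = Xq K q ^ ξ * Yq K q ^ r * Xq K q ^ (n - ξ)} ∪
        {a | ∃ ζ < r, a = Xq K q ^ (n - ζ) * Yq K q ^ r * Xq K q ^ ζ}) := by
    rintro _ ⟨j, rfl⟩
    have hjlt := j.isLt
    by_cases hj : (j:ℕ) ≤ r
    · left
      refine ⟨(j:ℕ), hj, ?_⟩
      simp only [he, hp, if_pos hj]
    · right
      push_neg at hj
      refine ⟨2*r - (j:ℕ), by omega, ?_⟩
      have hpj : p j = n - 2*r + (j:ℕ) := by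
        simp only [hp]
        rw [if_neg (not_le.mpr hj)]
      have h1 : p j = n - (2*r - (j:ℕ)) := by omega
      have h2 : n - p j = 2*r - (j:ℕ) := by omega
      simp only [he]
      rw [h2, h1]
  have hfinal : e i = ∑ k, lam k ^ i • v k := hall i (by omega)
  show e i ∈ _
  rw [hfinal]
  refine Submodule.sum_mem _ fun k _ => Submodule.smul_mem _ _ ?_
  exact Submodule.span_mono hsubset (hmem k)
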